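/- Let R be an integral domain and C̃ an S-complex over R. Then: (1) h(C̃) > 0 if and only if there exists α ∈ C_* with d(α) = 0 and δ₁(α) ≠ 0. (2) If h(C̃) = k for a positive integer k, then k is the largest integer such that there exists α ∈ C_* satisfying d(α) = 0, δ₁v^{k−1}(α) ≠ 0, and δ₁vⁱ(α) = 0 for all 0 ≤ i ≤ k−2. (3) If h(C̃) = k for a non-positive integer k, then k is the largest integer such that there exist elements a₀, …, a₋ₖ ∈ R and α ∈ C_* with d(α) = Σ_{i=0}^{−k} vⁱδ₂(aᵢ) and a₋ₖ ≠ 0. -/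

import Mathlib

/-!  S-complexes over a commutative ring `R` (following Daemi–Scaduto).

An S-complex is a ℤ-graded finitely generated free chain complex
`C̃ = C ⊕ C[1] ⊕ R` determined by the data of `C` together with maps
`d, v, δ₁, δ₂`.  We encode the graded module `C` by a single module `Tot`
together with an internal ℤ-grading by submodules, and we carry the sign
map `ε` (multiplication by `(-1)^i` on the degree `i` part) as data. -/

universe u

/-- The data of an S-complex over `R`: a module `Tot` (the total module of the
ℤ-graded module `C_*`), its grading, the sign map `ε`, and the structure maps
`d : C_* → C_{*-1}`, `v : C_* → C_{*-2}`, `δ₁ : C_* → R` (supported in degree 1),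
`δ₂ : R → C_{-2}`. -/
structure SComplexData (R : Type u) [CommRing R] where
  Tot : Type u
  [acg : AddCommGroup Tot]
  [mod : Module R Tot]
  grading : ℤ → Submodule R Tot
  sign : Tot →ₗ[R] Tot
  d : Tot →ₗ[R] Tot
  v : Tot →ₗ[R] Tot
  δ₁ : Tot →ₗ[R] R
  δ₂ : R →ₗ[R] Tot

attribute [instance] SComplexData.acg SComplexData.mod

namespace SComplexData

variable {R : Type u} [CommRing R]

/-- The axioms making the data of `X : SComplexData R` into a genuine S-complex:
the grading is an internal direct sum decomposition into finitely generated free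
pieces, the sign map is `(-1)^i` on the degree `i` piece, the structure maps are
graded of the appropriate degrees (`δ₁` supported on `C_1`, `δ₂` valued in `C_{-2}`),
and the S-complex relations `d∘d = 0`, `δ₁∘d = 0`, `d∘δ₂ = 0`,
`d∘v − v∘d − δ₂∘δ₁ = 0` hold; the latter are equivalent to `d̃ ∘ d̃ = 0` for the
differential `d̃(α, β, r) = (dα, vα − dβ + δ₂ r, δ₁ α)` on `C̃ = C ⊕ C[1] ⊕ R`. -/
structure IsSComplex (X : SComplexData R) : Prop where
  internal : DirectSum.IsInternal X.grading
  free : ∀ i : ℤ, Module.Free R ↥(X.grading i)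
  finite : Module.Finite R X.Tot
  sign_spec : ∀ i : ℤ, ∀ x ∈ X.grading i, X.sign x = if Even i then x else -x
  d_deg : ∀ i : ℤ, (X.grading i).map X.d ≤ X.grading (i - 1)
  v_deg : ∀ i : ℤ, (X.grading i).map X.v ≤ X.grading (i - 2)
  δ₁_deg : ∀ i : ℤ, i ≠ 1 → ∀ x ∈ X.grading i, X.δ₁ x = 0
  δ₂_deg : LinearMap.range X.δ₂ ≤ X.grading (-2)
  d_d : X.d ∘ₗ X.d = 0
  δ₁_d : X.δ₁ ∘ₗ X.d = 0
  d_δ₂ : X.d ∘ₗ X.δ₂ = 0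
  d_v : X.d ∘ₗ X.v - X.v ∘ₗ X.d - X.δ₂ ∘ₗ X.δ₁ = 0

/-- A morphism of S-complexes `λ̃ : C̃ → C̃'`, i.e. a degree-0 chain map
`λ̃(α, β, r) = (λ α, μ α + λ β + Δ₂ r, Δ₁ α + r)`, recorded through its
components `λ, μ, Δ₁, Δ₂` (here `l` stands for `λ`). -/
structure SMorphism (X Y : SComplexData R) where
  l : X.Tot →ₗ[R] Y.Tot
  μ : X.Tot →ₗ[R] Y.Tot
  Δ₁ : X.Tot →ₗ[R] R
  Δ₂ : R →ₗ[R] Y.Tot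
  l_deg : ∀ i : ℤ, (X.grading i).map l ≤ Y.grading i
  μ_deg : ∀ i : ℤ, (X.grading i).map μ ≤ Y.grading (i - 1)
  Δ₁_deg : ∀ i : ℤ, i ≠ 0 → ∀ x ∈ X.grading i, Δ₁ x = 0
  Δ₂_deg : LinearMap.range Δ₂ ≤ Y.grading (-1)
  comm_d : l ∘ₗ X.d = Y.d ∘ₗ l
  comm_δ₁ : Δ₁ ∘ₗ X.d + X.δ₁ = Y.δ₁ ∘ₗ l
  comm_δ₂ : Y.d ∘ₗ Δ₂ + l ∘ₗ X.δ₂ = Y.δ₂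
  comm_v : μ ∘ₗ X.d + Y.d ∘ₗ μ + l ∘ₗ X.v - Y.v ∘ₗ l + Δ₂ ∘ₗ X.δ₁ - Y.δ₂ ∘ₗ Δ₁ = 0

end SComplexData

/-- Functions `ℕ → M` with finitely many nonzero values (i.e. support bounded
above); this realizes the polynomial module `M[x]`. -/
def NatBdd (R : Type u) [CommRing R] (M : Type u) [AddCommGroup M] [Module R M] :
    Submodule R (ℕ → M) where
  carrier := {f | ∃ N : ℕ, ∀ n : ℕ, N < n → f n = 0}
  add_mem' := by
    rintro f g ⟨N, hN⟩ ⟨K, hK⟩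
    refine ⟨max N K, fun n hn => ?_⟩
    have h1 := hN n (lt_of_le_of_lt (le_max_left N K) hn)
    have h2 := hK n (lt_of_le_of_lt (le_max_right N K) hn)
    show f n + g n = 0
    rw [h1, h2, add_zero]
  zero_mem' := ⟨0, fun _ _ => rfl⟩
  smul_mem' := by
    rintro c f ⟨N, hN⟩
    refine ⟨N, fun n hn => ?_⟩
    show c • f n = 0
    rw [hN n hn, smul_zero]

/-- Functions `ℤ → M` with support bounded above; for `M = R` this realizes the
ring `R[[x⁻¹, x]]` of Laurent series with finitely many positive powers of `x`. -/
def IntBdd (R : Type u) [CommRing R] (M : Type u) [AddCommGroup M] [Module R M] :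
    Submodule R (ℤ → M) where
  carrier := {f | ∃ N : ℤ, ∀ n : ℤ, N < n → f n = 0}
  add_mem' := by
    rintro f g ⟨N, hN⟩ ⟨K, hK⟩
    refine ⟨max N K, fun n hn => ?_⟩
    have h1 := hN n (lt_of_le_of_lt (le_max_left N K) hn)
    have h2 := hK n (lt_of_le_of_lt (le_max_right N K) hn)
    show f n + g n = 0
    rw [h1, h2, add_zero]
  zero_mem' := ⟨0, fun _ _ => rfl⟩
  smul_mem' := by
    rintro c f ⟨N, hN⟩
    refine ⟨N, fun n hn => ?_⟩
    show c • f n = 0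
    rw [hN n hn, smul_zero]

/-- The multiplication of `R[[x⁻¹, x]]`, realized as a convolution product on
functions `ℤ → R` with support bounded above. -/
noncomputable def lmul {R : Type u} [CommRing R] (f g : ↥(IntBdd R R)) : ↥(IntBdd R R) :=
  ⟨fun n => ∑ᶠ i : ℤ, f.1 i * g.1 (n - i), by
    obtain ⟨N, hN⟩ := f.2
    obtain ⟨K, hK⟩ := g.2
    refine ⟨N + K, fun n hn => ?_⟩
    apply finsum_eq_zero_of_forall_eq_zero
    intro i
    by_cases h : N < i
    · rw [hN i h, zero_mul]
    · rw [hK (n - i) (by omega), mul_zero]⟩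

namespace SComplexData

variable {R : Type u} [CommRing R]

/-- The carrier of the small equivariant complex `𝔣Ĉ_* = C_{*-1} ⊕ R[x]`,
with `R[x]` realized as finitely supported functions `ℕ → R`. -/
abbrev Small (X : SComplexData R) : Type u := X.Tot × ↥(NatBdd R R)

/-- `Σᵢ vⁱ δ₂(aᵢ)` for a polynomial with coefficients `aᵢ`. -/
noncomputable def sumV (X : SComplexData R) (f : ↥(NatBdd R R)) : X.Tot :=
  ∑ᶠ i : ℕ, (X.v ^ i) (X.δ₂ (f.1 i))

/-- The differential `𝔡̂(α, Σᵢ aᵢxⁱ) = (dα − Σᵢ vⁱδ₂(aᵢ), 0)` of the small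
equivariant complex. -/
noncomputable def smallD (X : SComplexData R) : X.Small → X.Small :=
  fun z => (X.d z.1 - X.sumV z.2, 0)

/-- The `R[x]`-module structure of the small equivariant complex:
`x · (α, p(x)) = (v(α), δ₁(α) + x·p(x))`; this is the action of `x`. -/
noncomputable def xSmall (X : SComplexData R) : X.Small → X.Small :=
  fun z => (X.v z.1, ⟨fun n => if n = 0 then X.δ₁ z.1 else z.2.1 (n - 1), by
    obtain ⟨N, hN⟩ := z.2.2
    refine ⟨N + 1, fun n hn => ?_⟩
    show (if n = 0 then X.δ₁ z.1 else z.2.1 (n - 1)) = 0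
    rw [if_neg (by omega)]
    exact hN (n - 1) (by omega)⟩)

/-- The map `𝔦 : 𝔣Ĉ_* → R[[x⁻¹, x]]`,
`𝔦(α, Σᵢ aᵢxⁱ) = Σ_{i ≤ −1} δ₁v^{−i−1}(α) xⁱ + Σᵢ aᵢxⁱ`. -/
noncomputable def iota (X : SComplexData R) : X.Small → ↥(IntBdd R R) :=
  fun z => ⟨fun n => if n < 0 then X.δ₁ ((X.v ^ (-n - 1).toNat) z.1) else z.2.1 n.toNat, by
    obtain ⟨N, hN⟩ := z.2.2
    refine ⟨(N : ℤ), fun n hn => ?_⟩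
    show (if n < 0 then X.δ₁ ((X.v ^ (-n - 1).toNat) z.1) else z.2.1 n.toNat) = 0
    rw [if_neg (by omega)]
    exact hN n.toNat (by omega)⟩

/-- `𝔍(C̃) = 𝔦(ker 𝔡̂)`, an `R[x]`-submodule of `R[[x⁻¹, x]]`, here recorded
as a set. -/
noncomputable def JJ (X : SComplexData R) : Set ↥(IntBdd R R) :=
  X.iota '' {z | X.smallD z = 0}

/-- `DegEq Q n` means that the Laurent series `Q` is nonzero with `Deg Q = n`,
i.e. `n` is the largest exponent with nonzero coefficient. -/
def DegEq {R : Type u} [CommRing R] (Q : ↥(IntBdd R R)) (n : ℤ) : Prop :=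
  Q.1 n ≠ 0 ∧ ∀ m : ℤ, n < m → Q.1 m = 0

/-- The set of degrees of nonzero elements of `𝔍(C̃)`. -/
noncomputable def degSet (X : SComplexData R) : Set ℤ :=
  {n : ℤ | ∃ Q ∈ X.JJ, DegEq Q n}

/-- The Frøyshov invariant `h(C̃) = −inf {Deg Q : 0 ≠ Q ∈ 𝔍(C̃)}`. -/
noncomputable def hInv (X : SComplexData R) : ℤ := -sInf X.degSet

/-- The ideal `J_i(C̃) = {a ∈ R : ∃ Q = a·x^{−i} + (lower order terms) ∈ 𝔍(C̃)}`,
recorded as a set. -/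
noncomputable def Jideal (X : SComplexData R) (i : ℤ) : Set R :=
  {a : R | ∃ Q ∈ X.JJ, (∀ m : ℤ, -i < m → Q.1 m = 0) ∧ Q.1 (-i) = a}

end SComplexData

section Aux

namespace SComplexData

variable {R : Type u} [CommRing R] {X : SComplexData R}

lemma v_pow_mem (hA : X.IsSComplex) (j : ℕ) {i : ℤ} {x : X.Tot}
    (hx : x ∈ X.grading i) : (X.v ^ j) x ∈ X.grading (i - 2 * j) := by
  induction j generalizing i x with
  | zero => simpa using hx
  | succ m ih =>
    have h1 : X.v x ∈ X.grading (i - 2) := hA.v_deg i ⟨x, hx, rfl⟩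
    have h2 := ih h1
    have h3 : (X.v ^ (m + 1)) x = (X.v ^ m) (X.v x) := by
      rw [pow_succ, Module.End.mul_apply]
    have hcast : i - 2 * ((m + 1 : ℕ) : ℤ) = i - 2 - 2 * (m : ℕ) := by push_cast; ring
    rw [h3, hcast]
    exact h2

lemma exists_finset_grading (hA : X.IsSComplex) :
    ∃ s : Finset ℤ, (⊤ : Submodule R X.Tot) ≤ ⨆ i ∈ s, X.grading i := by
  have h1 : (⊤ : Submodule R X.Tot).FG := hA.finite.fg_top
  exact CompleteLattice.IsCompactElement.exists_finset_of_le_iSup _ ((Submodule.fg_iff_compact _).mp h1) X.grading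
    hA.internal.submodule_iSup_eq_top.ge

lemma delta1_v_pow_zero (hA : X.IsSComplex) :
    ∃ J : ℕ, ∀ j : ℕ, J ≤ j → ∀ α : X.Tot, X.δ₁ ((X.v ^ j) α) = 0 := by
  obtain ⟨s, hs⟩ := exists_finset_grading hA
  refine ⟨s.sup Int.toNat + 1, fun j hj α => ?_⟩
  have hns : (2 * (j : ℤ) + 1) ∉ s := by
    intro hmem
    have := Finset.le_sup (f := Int.toNat) hmem
    omega
  have hα : α ∈ ⨆ i ∈ s, X.grading i := hs Submodule.mem_top
  rw [iSup_subtype'] at hα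
  refine Submodule.iSup_induction (motive := fun y => X.δ₁ ((X.v ^ j) y) = 0) _ hα
    (fun i x hx => ?_) (by simp) (fun x y hx hy => by
      show X.δ₁ ((X.v ^ j) (x + y)) = 0
      rw [map_add, map_add, show X.δ₁ ((X.v ^ j) x) = 0 from hx,
        show X.δ₁ ((X.v ^ j) y) = 0 from hy, add_zero])
  show X.δ₁ ((X.v ^ j) x) = 0
  refine hA.δ₁_deg ((i : ℤ) - 2 * j) ?_ _ (v_pow_mem hA j hx)
  intro h
  apply hns
  have h2 : (i : ℤ) = 2 * j + 1 := by omega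
  rw [← h2]
  exact i.2

lemma v_pow_delta2_zero (hA : X.IsSComplex) :
    ∃ N : ℕ, (X.v ^ N) (X.δ₂ 1) = 0 := by
  obtain ⟨s, hs⟩ := exists_finset_grading hA
  refine ⟨s.sup (fun i => (-i).toNat), ?_⟩
  set N : ℕ := s.sup (fun i => (-i).toNat) with hN
  have hns : (-2 - 2 * (N : ℤ)) ∉ (↑s : Set ℤ) := by
    intro hmem
    have h2 : (-(-2 - 2 * (N : ℤ))).toNat ≤ N :=
      Finset.le_sup (f := fun i : ℤ => (-i).toNat) (Finset.mem_coe.mp hmem)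
    omega
  have h0 : X.δ₂ 1 ∈ X.grading (-2) := hA.δ₂_deg ⟨1, rfl⟩
  have hx : (X.v ^ N) (X.δ₂ 1) ∈ X.grading (-2 - 2 * (N : ℤ)) := v_pow_mem hA N h0
  have hmem2 : (X.v ^ N) (X.δ₂ 1) ∈ ⨆ i ∈ (↑s : Set ℤ), X.grading i := by
    have := hs (Submodule.mem_top (x := (X.v ^ N) (X.δ₂ 1)))
    simpa using this
  have hdisj := hA.internal.submodule_iSupIndep.disjoint_biSup
    (x := (-2 - 2 * (N : ℤ))) (y := (↑s : Set ℤ)) hns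
  exact Submodule.disjoint_def.mp hdisj _ hx hmem2

lemma smallD_eq_zero_iff {z : X.Small} : X.smallD z = 0 ↔ X.d z.1 = X.sumV z.2 := by
  simp [smallD, Prod.ext_iff, sub_eq_zero]

lemma iota_neg (z : X.Small) {n : ℤ} (hn : n < 0) :
    (X.iota z).1 n = X.δ₁ ((X.v ^ (-n - 1).toNat) z.1) :=
  if_pos hn

lemma iota_nonneg (z : X.Small) {n : ℤ} (hn : 0 ≤ n) :
    (X.iota z).1 n = z.2.1 n.toNat :=
  if_neg (not_lt.mpr hn)

lemma sumV_eq (f : ↥(NatBdd R R)) (N : ℕ) (hf : ∀ i : ℕ, N < i → f.1 i = 0) :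
    X.sumV f = ∑ i ∈ Finset.range (N + 1), (X.v ^ i) (X.δ₂ (f.1 i)) := by
  refine finsum_eq_finset_sum_of_support_subset _ ?_
  intro i hi
  simp only [Finset.coe_range, Set.mem_Iio]
  by_contra h
  push_neg at h
  exact Function.mem_support.mp hi (by rw [hf i (by omega), map_zero, map_zero])

lemma sumV_zero : X.sumV (0 : ↥(NatBdd R R)) = 0 := by
  refine finsum_eq_zero_of_forall_eq_zero fun i => ?_
  show (X.v ^ i) (X.δ₂ ((0 : ↥(NatBdd R R)).1 i)) = 0
  rw [show ((0 : ↥(NatBdd R R)).1 i) = 0 from rfl, map_zero, map_zero]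

lemma d_v_pow (hA : X.IsSComplex) {α : X.Tot} (hd : X.d α = 0) (m : ℕ)
    (h : ∀ i : ℕ, i < m → X.δ₁ ((X.v ^ i) α) = 0) : X.d ((X.v ^ m) α) = 0 := by
  induction m with
  | zero => simpa using hd
  | succ n ih =>
    have h1 : X.d ((X.v ^ n) α) = 0 := ih (fun i hi => h i (by omega))
    have hdv : X.d (X.v ((X.v ^ n) α)) =
        X.v (X.d ((X.v ^ n) α)) + X.δ₂ (X.δ₁ ((X.v ^ n) α)) := by
      have hc := LinearMap.congr_fun hA.d_v ((X.v ^ n) α)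
      simp only [LinearMap.sub_apply, LinearMap.comp_apply, LinearMap.zero_apply] at hc
      rw [sub_sub, sub_eq_zero] at hc
      exact hc
    rw [pow_succ', Module.End.mul_apply, hdv, h1, map_zero, h n (by omega), map_zero, add_zero]

lemma mem_degSet_neg {n : ℤ} (hn : n < 0) :
    n ∈ X.degSet ↔ ∃ α : X.Tot, X.d α = 0 ∧ X.δ₁ ((X.v ^ (-n - 1).toNat) α) ≠ 0 ∧
      ∀ i : ℕ, (i : ℤ) ≤ -n - 2 → X.δ₁ ((X.v ^ i) α) = 0 := by
  constructor
  · rintro ⟨Q, ⟨z, hz, rfl⟩, hQ1, hQ2⟩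
    refine ⟨z.1, ?_, ?_, ?_⟩
    · have hf : ∀ j : ℕ, z.2.1 j = 0 := by
        intro j
        have h := hQ2 (j : ℤ) (by omega)
        rw [iota_nonneg _ (by omega)] at h
        rwa [(by omega : ((j : ℤ)).toNat = j)] at h
      rw [smallD_eq_zero_iff.mp hz]
      exact finsum_eq_zero_of_forall_eq_zero fun i => by rw [hf i, map_zero, map_zero]
    · rw [iota_neg _ hn] at hQ1
      exact hQ1
    · intro i hi
      have h := hQ2 (-(i : ℤ) - 1) (by omega)
      rw [iota_neg _ (by omega)] at h
      rwa [(by omega : (-(-(i : ℤ) - 1) - 1).toNat = i)] at h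
  · rintro ⟨α, hd, h1, h2⟩
    refine ⟨X.iota (α, 0), ⟨(α, 0), ?_, rfl⟩, ?_, ?_⟩
    · show X.smallD (α, 0) = 0
      rw [smallD_eq_zero_iff]
      exact hd.trans sumV_zero.symm
    · rw [iota_neg _ hn]
      exact h1
    · intro m hm
      by_cases hm0 : m < 0
      · rw [iota_neg _ hm0]
        exact h2 _ (by omega)
      · rw [iota_nonneg _ (by omega)]
        rfl

lemma mem_degSet_nonneg {n : ℤ} (hn : 0 ≤ n) :
    n ∈ X.degSet ↔ ∃ (a : ℕ → R) (α : X.Tot),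
      X.d α = ∑ i ∈ Finset.range (n.toNat + 1), (X.v ^ i) (X.δ₂ (a i)) ∧ a n.toNat ≠ 0 := by
  constructor
  · rintro ⟨Q, ⟨z, hz, rfl⟩, hQ1, hQ2⟩
    refine ⟨z.2.1, z.1, ?_, ?_⟩
    · rw [smallD_eq_zero_iff.mp hz]
      refine sumV_eq z.2 n.toNat fun i hi => ?_
      have h := hQ2 (i : ℤ) (by omega)
      rw [iota_nonneg _ (by omega)] at h
      rwa [(by omega : ((i : ℤ)).toNat = i)] at h
    · rw [iota_nonneg _ hn] at hQ1
      exact hQ1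
  · rintro ⟨a, α, hd, ha⟩
    refine ⟨X.iota (α, ⟨fun i => if i ≤ n.toNat then a i else 0,
        ⟨n.toNat, fun i hi => if_neg (by omega)⟩⟩),
      ⟨(α, ⟨fun i => if i ≤ n.toNat then a i else 0,
        ⟨n.toNat, fun i hi => if_neg (by omega)⟩⟩), ?_, rfl⟩, ?_, ?_⟩
    · show X.smallD _ = 0
      rw [smallD_eq_zero_iff]
      show X.d α = X.sumV _
      rw [sumV_eq _ n.toNat (fun i hi => if_neg (by omega)), hd]
      refine Finset.sum_congr rfl fun i hi => ?_
      show (X.v ^ i) (X.δ₂ (a i)) = (X.v ^ i) (X.δ₂ (if i ≤ n.toNat then a i else 0))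
      rw [if_pos (Nat.lt_succ_iff.mp (Finset.mem_range.mp hi))]
    · rw [iota_nonneg _ hn]
      show (if n.toNat ≤ n.toNat then a n.toNat else 0) ≠ 0
      rw [if_pos le_rfl]
      exact ha
    · intro m hm
      rw [iota_nonneg _ (by omega)]
      show (if m.toNat ≤ n.toNat then a m.toNat else 0) = 0
      rw [if_neg (by omega)]

lemma degSet_props [Nontrivial R] (hA : X.IsSComplex) :
    sInf X.degSet ∈ X.degSet ∧ ∀ n ∈ X.degSet, sInf X.degSet ≤ n := by
  obtain ⟨N, hNz⟩ := v_pow_delta2_zero hA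
  have hne : X.degSet.Nonempty := by
    have hsum : ∑ i ∈ Finset.range (N + 1), (X.v ^ i) (X.δ₂ (if i = N then (1 : R) else 0))
        = (X.v ^ N) (X.δ₂ 1) := by
      rw [Finset.sum_eq_single N]
      · rw [if_pos rfl]
      · intro b _ hbne
        rw [if_neg hbne, map_zero, map_zero]
      · intro hN
        exact absurd (Finset.self_mem_range_succ N) hN
    refine ⟨(N : ℤ), (mem_degSet_nonneg (by omega)).mpr
      ⟨fun i => if i = N then 1 else 0, 0, ?_, ?_⟩⟩
    · rw [map_zero, (by omega : ((N : ℤ)).toNat = N)]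
      exact (hsum.trans hNz).symm
    · rw [(by omega : ((N : ℤ)).toNat = N)]
      show (if N = N then (1 : R) else 0) ≠ 0
      rw [if_pos rfl]
      exact one_ne_zero
  obtain ⟨J, hJ⟩ := delta1_v_pow_zero hA
  have hbdd : BddBelow X.degSet := by
    refine ⟨-(J : ℤ), fun n hn => ?_⟩
    by_contra hc
    push_neg at hc
    obtain ⟨Q, ⟨z, hz, rfl⟩, hQ1, _⟩ := hn
    rw [iota_neg _ (by omega)] at hQ1
    exact hQ1 (hJ _ (by omega) _)
  exact ⟨Int.csInf_mem hne hbdd, fun n hn => csInf_le hbdd hn⟩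

end SComplexData

end Aux

open SComplexData in
/-- **Statement 2.** Characterization of the Frøyshov invariant `h` of an
S-complex over an integral domain, in terms of the maps `d, v, δ₁, δ₂`. -/
theorem statement2 {R : Type u} [CommRing R] [IsDomain R]
    (A : SComplexData R) (hA : A.IsSComplex) :
    (0 < A.hInv ↔ ∃ α : A.Tot, A.d α = 0 ∧ A.δ₁ α ≠ 0) ∧
    (∀ k : ℤ, 0 < k → A.hInv = k →
      IsGreatest {m : ℤ | ∃ α : A.Tot, A.d α = 0 ∧
        A.δ₁ ((A.v ^ (m - 1).toNat) α) ≠ 0 ∧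
        ∀ i : ℕ, (i : ℤ) ≤ m - 2 → A.δ₁ ((A.v ^ i) α) = 0} k) ∧
    (∀ k : ℤ, k ≤ 0 → A.hInv = k →
      IsGreatest {m : ℤ | m ≤ 0 ∧ ∃ (a : ℕ → R) (α : A.Tot),
        A.d α = ∑ i ∈ Finset.range ((-m).toNat + 1), (A.v ^ i) (A.δ₂ (a i)) ∧
        a ((-m).toNat) ≠ 0} k) := by
  obtain ⟨hmem, hlb⟩ := degSet_props hA
  have hInv_eq : A.hInv = -sInf A.degSet := rfl
  refine ⟨⟨?_, ?_⟩, ?_, ?_⟩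
  · -- 0 < hInv → cycle with δ₁ ≠ 0
    intro h
    rw [hInv_eq] at h
    have hneg : sInf A.degSet < 0 := by omega
    obtain ⟨α, hd, h1, h2⟩ := (mem_degSet_neg hneg).mp hmem
    exact ⟨(A.v ^ (-(sInf A.degSet) - 1).toNat) α,
      d_v_pow hA hd _ (fun i hi => h2 i (by omega)), h1⟩
  · -- cycle with δ₁ ≠ 0 → 0 < hInv
    rintro ⟨α, hd, h1⟩
    have hmem1 : (-1 : ℤ) ∈ A.degSet := by
      refine (mem_degSet_neg (by omega)).mpr ⟨α, hd, ?_, fun i hi => absurd hi (by omega)⟩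
      rw [(by omega : (-(-1 : ℤ) - 1).toNat = 0), pow_zero, Module.End.one_apply]
      exact h1
    have := hlb _ hmem1
    rw [hInv_eq]
    omega
  · -- positive case
    intro k hk hke
    rw [hInv_eq] at hke
    have hsinf : sInf A.degSet = -k := by omega
    rw [hsinf] at hmem
    constructor
    · obtain ⟨α, hd, h1, h2⟩ := (mem_degSet_neg (show -k < 0 by omega)).mp hmem
      refine ⟨α, hd, ?_, fun i hi => h2 i (by omega)⟩
      rwa [(by omega : (-(-k) - 1).toNat = (k - 1).toNat)] at h1
    · intro m hm
      by_cases hm0 : m ≤ 0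
      · omega
      · obtain ⟨α, hd, h1, h2⟩ := hm
        have hmm : (-m : ℤ) ∈ A.degSet := by
          refine (mem_degSet_neg (show -m < 0 by omega)).mpr
            ⟨α, hd, ?_, fun i hi => h2 i (by omega)⟩
          rwa [(by omega : (-(-m) - 1).toNat = (m - 1).toNat)]
        have := hlb _ hmm
        omega
  · -- nonpositive case
    intro k hk hke
    rw [hInv_eq] at hke
    have hsinf : sInf A.degSet = -k := by omega
    rw [hsinf] at hmem
    constructor
    · obtain ⟨a, α, hd, ha⟩ := (mem_degSet_nonneg (show (0:ℤ) ≤ -k by omega)).mp hmem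
      exact ⟨hk, a, α, hd, ha⟩
    · rintro m ⟨hm0, a, α, hd, ha⟩
      have hmm : (-m : ℤ) ∈ A.degSet :=
        (mem_degSet_nonneg (show (0:ℤ) ≤ -m by omega)).mpr ⟨a, α, hd, ha⟩
      have := hlb _ hmm
      omega
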